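/- Let (X_k) be a sequence of nonempty metric spaces and let Y be a nonempty metric space such that d̂(X_k, Y) → 0 as k → ∞. If every X_k is bounded (has finite diameter), then Y is bounded and diam(X_k) → diam(Y) as k → ∞. -/
import Mathlib


open ENNReal

/-- `f` is an `(A,B)`-quasi-isometric embedding. -/
def QIEmb {X Y : Type*} [MetricSpace X] [MetricSpace Y] (A B : ℝ) (f : X → Y) : Prop :=
  ∀ x x' : X, (1 / A) * dist x x' - B ≤ dist (f x) (f x') ∧
    dist (f x) (f x') ≤ A * dist x x' + B

/-- `X` and `Y` are `(A,B,C)`-quasi-isometric. -/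
def QuasiIsometric (X Y : Type*) [MetricSpace X] [MetricSpace Y] (A B C : ℝ) : Prop :=
  ∃ (f : X → Y) (g : Y → X), QIEmb A B f ∧ QIEmb A B g ∧
    (∀ x : X, dist (g (f x)) x ≤ C) ∧ (∀ y : Y, dist (f (g y)) y ≤ C)

/-- The quasi-isometric distance `d̂`. -/
noncomputable def qiDist (X Y : Type*) [MetricSpace X] [MetricSpace Y] : ℝ≥0∞ :=
  sInf {e : ℝ≥0∞ | ∃ r : ℝ, 0 < r ∧ e = ENNReal.ofReal r ∧ QuasiIsometric X Y (1 + r) r r}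

open Filter

lemma QuasiIsometric.symm' {X Y : Type*} [MetricSpace X] [MetricSpace Y] {A B C : ℝ}
    (h : QuasiIsometric X Y A B C) : QuasiIsometric Y X A B C := by
  obtain ⟨f, g, hf, hg, hgf, hfg⟩ := h
  exact ⟨g, f, hg, hf, hfg, hgf⟩

lemma qi_key {X Y : Type*} [MetricSpace X] [MetricSpace Y] {r : ℝ} (hr : 0 < r)
    (h : QuasiIsometric X Y (1 + r) r r) (hX : Bornology.IsBounded (Set.univ : Set X)) :
    Bornology.IsBounded (Set.univ : Set Y) ∧
      Metric.diam (Set.univ : Set Y) ≤ (1 + r) * Metric.diam (Set.univ : Set X) + 3 * r := by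
  obtain ⟨f, g, hf, hg, hgf, hfg⟩ := h
  have hD : ∀ y y' : Y, dist y y' ≤ (1 + r) * Metric.diam (Set.univ : Set X) + 3 * r := by
    intro y y'
    have h1 : dist y y' ≤ dist y (f (g y)) + dist (f (g y)) (f (g y')) + dist (f (g y')) y' :=
      dist_triangle4 _ _ _ _
    have h2 : dist (f (g y)) (f (g y')) ≤ (1 + r) * dist (g y) (g y') + r := (hf _ _).2
    have h3 : dist (g y) (g y') ≤ Metric.diam (Set.univ : Set X) :=
      Metric.dist_le_diam_of_mem hX (Set.mem_univ _) (Set.mem_univ _)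
    have h4 := hfg y
    have h5 := hfg y'
    rw [dist_comm y (f (g y))] at h1
    have h6 : (1 + r) * dist (g y) (g y') ≤ (1 + r) * Metric.diam (Set.univ : Set X) :=
      mul_le_mul_of_nonneg_left h3 (by linarith)
    linarith
  have hbY : Bornology.IsBounded (Set.univ : Set Y) := by
    rw [Metric.isBounded_iff]
    exact ⟨_, fun y _ y' _ => hD y y'⟩
  have hdiamX : 0 ≤ Metric.diam (Set.univ : Set X) := Metric.diam_nonneg
  refine ⟨hbY, Metric.diam_le_of_forall_dist_le (by nlinarith) (fun y _ y' _ => hD y y')⟩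

/-- Boundedness is inherited by quasi-isometric limits, and diameters converge. -/
theorem bounded_of_qi_limit_and_diam_tendsto
    (X : ℕ → Type*) [∀ k, MetricSpace (X k)] [∀ k, Nonempty (X k)]
    (Y : Type*) [MetricSpace Y] [Nonempty Y]
    (hconv : Tendsto (fun k => qiDist (X k) Y) atTop (nhds 0))
    (hbdd : ∀ k, Bornology.IsBounded (Set.univ : Set (X k))) :
    Bornology.IsBounded (Set.univ : Set Y) ∧
    Tendsto (fun k => Metric.diam (Set.univ : Set (X k))) atTop
      (nhds (Metric.diam (Set.univ : Set Y))) := by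
  have h1 : ∀ᶠ k in atTop, qiDist (X k) Y < ENNReal.ofReal 1 :=
    hconv.eventually_lt_const (by simp)
  obtain ⟨k0, hk0⟩ := h1.exists
  obtain ⟨e, ⟨r, hr, rfl, hQI⟩, _⟩ := sInf_lt_iff.mp hk0
  have hY := (qi_key hr hQI (hbdd k0)).1
  refine ⟨hY, ?_⟩
  rw [Metric.tendsto_atTop]
  intro ε hε
  set DY := Metric.diam (Set.univ : Set Y) with hDYdef
  have hDY : 0 ≤ DY := Metric.diam_nonneg
  set r₀ : ℝ := min 1 (ε / (2 * DY + 8)) with hr₀def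
  have hr₀ : 0 < r₀ := lt_min one_pos (by positivity)
  have hev : ∀ᶠ k in atTop, qiDist (X k) Y < ENNReal.ofReal r₀ :=
    hconv.eventually_lt_const (ENNReal.ofReal_pos.mpr hr₀)
  obtain ⟨N, hN⟩ := eventually_atTop.mp hev
  refine ⟨N, fun n hn => ?_⟩
  obtain ⟨e, ⟨s, hs, rfl, hQI'⟩, hlt⟩ := sInf_lt_iff.mp (hN n hn)
  have hs₀ : s < r₀ := (ENNReal.ofReal_lt_ofReal_iff hr₀).mp hlt
  have hup := (qi_key hs hQI' (hbdd n)).2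
  have hdown := (qi_key hs hQI'.symm' hY).2
  have hDX : 0 ≤ Metric.diam (Set.univ : Set (X n)) := Metric.diam_nonneg
  have hs1 : s < 1 := lt_of_lt_of_le hs₀ (min_le_left _ _)
  have hsε : s * (2 * DY + 8) < ε := by
    have h8 : (0:ℝ) < 2 * DY + 8 := by positivity
    have := lt_of_lt_of_le hs₀ (min_le_right 1 (ε / (2 * DY + 8)))
    calc s * (2 * DY + 8) < (ε / (2 * DY + 8)) * (2 * DY + 8) := by
          exact mul_lt_mul_of_pos_right this h8
      _ = ε := div_mul_cancel₀ ε (ne_of_gt h8)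
  rw [Real.dist_eq, abs_lt]
  constructor <;> nlinarith
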